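/- Let {f_i}_{i∈ℕ} be nonzero holomorphic functions on the unit disk 𝔻 such that the functions |f_i|² are pairwise distinct as functions on 𝔻, and Σ_i f_i(z) converges absolutely for every z ∈ 𝔻. Let {α_i} be a bounded sequence of complex numbers. If there is a sequence of integers N_m → ∞ with Σ_{i=1}^∞ α_i·f_i^{N_m}(z) = 0 for all m and all z ∈ 𝔻, then α_i = 0 for every i. -/

import Mathlib

open Filter

lemma normSq_analytic {g : ℂ → ℂ} (h : DifferentiableOn ℂ g (Metric.ball (0:ℂ) 1)) :
    AnalyticOnNhd ℝ (fun z => Complex.normSq (g z)) (Metric.ball (0:ℂ) 1) := by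
  have hg : AnalyticOnNhd ℂ g (Metric.ball (0:ℂ) 1) := h.analyticOnNhd Metric.isOpen_ball
  have hgR : AnalyticOnNhd ℝ g (Metric.ball (0:ℂ) 1) := hg.restrictScalars
  have hre : AnalyticOnNhd ℝ (fun z => (g z).re) (Metric.ball (0:ℂ) 1) :=
    Complex.reCLM.comp_analyticOnNhd hgR
  have him : AnalyticOnNhd ℝ (fun z => (g z).im) (Metric.ball (0:ℂ) 1) :=
    Complex.imCLM.comp_analyticOnNhd hgR
  have := (hre.mul hre).add (him.mul him)
  refine AnalyticOnNhd.congr Metric.isOpen_ball this ?_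
  intro z _
  simp [Complex.normSq_apply]

/-- Let `{f_i}` be nonzero holomorphic functions on the unit disk whose squared moduli
`|f_i|²` are pairwise distinct functions, with `∑_i f_i(z)` absolutely convergent at each
point of the disk, and let `{α_i}` be a bounded sequence of complex numbers. If for a
sequence of integers `N_m → ∞` one has `∑_i α_i f_i(z)^{N_m} = 0` for all `m` and all `z`
in the disk, then every `α_i = 0`. -/
theorem stmt_6 (f : ℕ → ℂ → ℂ) (α : ℕ → ℂ) (N : ℕ → ℕ)
    (hol : ∀ i, DifferentiableOn ℂ (f i) (Metric.ball (0:ℂ) 1))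
    (hnz : ∀ i, ∃ z ∈ Metric.ball (0:ℂ) 1, f i z ≠ 0)
    (hdist : ∀ i j, i ≠ j →
      ∃ z ∈ Metric.ball (0:ℂ) 1, ‖f i z‖ ^ 2 ≠ ‖f j z‖ ^ 2)
    (habs : ∀ z ∈ Metric.ball (0:ℂ) 1, Summable (fun i => ‖f i z‖))
    (hbdd : ∃ C : ℝ, ∀ i, ‖α i‖ ≤ C)
    (hN : Tendsto N atTop atTop)
    (hzero : ∀ m, ∀ z ∈ Metric.ball (0:ℂ) 1, HasSum (fun i => α i * (f i z) ^ (N m)) 0) :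
    ∀ i, α i = 0 := by
  classical
  obtain ⟨C, hC⟩ := hbdd
  have hC0 : 0 ≤ C := le_trans (norm_nonneg _) (hC 0)
  set B := Metric.ball (0:ℂ) 1 with hBdef
  have hBo : IsOpen B := Metric.isOpen_ball
  have hBc : IsPreconnected B := (convex_ball (0:ℂ) 1).isPreconnected
  set g : ℕ → ℕ → ℂ → ℝ :=
    fun j k z => Complex.normSq (f j z) - Complex.normSq (f k z) with hgdef
  have hganal : ∀ j k, AnalyticOnNhd ℝ (g j k) B :=
    fun j k => (normSq_analytic (hol j)).sub (normSq_analytic (hol k))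
  have hgcont : ∀ j k, ContinuousOn (g j k) B := fun j k =>
    (Complex.continuous_normSq.comp_continuousOn (hol j).continuousOn).sub
      (Complex.continuous_normSq.comp_continuousOn (hol k).continuousOn)
  set D : ℕ × ℕ → Set ℂ := fun p =>
    if p.1 = p.2 then Set.univ else
      {z : ℂ | 1 < ‖z‖} ∪ (B ∩ g p.1 p.2 ⁻¹' ({0}ᶜ)) with hDdef
  have hDopen : ∀ p, IsOpen (D p) := by
    rintro ⟨j, k⟩
    by_cases hjk : j = k
    · simp [hDdef, hjk]
    · simp only [hDdef, if_neg hjk]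
      refine IsOpen.union ?_ ?_
      · exact isOpen_lt continuous_const continuous_norm
      · exact (hgcont j k).isOpen_inter_preimage hBo isOpen_compl_singleton
  have hDdense : ∀ p, Dense (D p) := by
    rintro ⟨j, k⟩
    by_cases hjk : j = k
    · simp [hDdef, hjk, dense_univ]
    · simp only [hDdef, if_neg hjk]
      intro z
      rcases lt_or_ge ‖z‖ 1 with hz | hz
      · refine closure_mono Set.subset_union_right ?_
        have hzB : z ∈ B := by
          simpa [hBdef, Metric.mem_ball, Complex.dist_eq] using hz
        rw [mem_closure_iff_frequently]
        by_contra h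
        have hnot : ∀ᶠ w in nhds z, w ∉ B ∩ g j k ⁻¹' ({0}ᶜ) := not_frequently.mp h
        have hev : g j k =ᶠ[nhds z] 0 := by
          filter_upwards [hnot, hBo.mem_nhds hzB] with w hw hwB
          by_contra hgw
          exact hw ⟨hwB, hgw⟩
        have hEq := (hganal j k).eqOn_zero_of_preconnected_of_eventuallyEq_zero hBc hzB hev
        obtain ⟨w, hwB, hwne⟩ := hdist j k hjk
        apply hwne
        have h0 : g j k w = 0 := hEq hwB
        have : Complex.normSq (f j w) = Complex.normSq (f k w) := by
          simpa [hgdef, sub_eq_zero] using h0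
        rw [Complex.sq_norm, Complex.sq_norm, this]
      · refine closure_mono Set.subset_union_left ?_
        have htend : Tendsto (fun n : ℕ => (1 + (1:ℝ) / (n + 1)) • z) atTop (nhds z) := by
          have h1 : Tendsto (fun n : ℕ => (1 + (1:ℝ) / (n + 1))) atTop (nhds (1 + 0)) :=
            tendsto_const_nhds.add tendsto_one_div_add_atTop_nhds_zero_nat
          rw [add_zero] at h1
          have := h1.smul_const z
          simpa using this
        refine mem_closure_of_tendsto htend (Filter.Eventually.of_forall ?_)
        intro n
        have hpos : (0:ℝ) < 1 / (n + 1) := by positivity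
        have : ‖(1 + (1:ℝ) / (n + 1)) • z‖
            = (1 + (1:ℝ) / (n + 1)) * ‖z‖ := by
          rw [norm_smul,
            Real.norm_eq_abs, abs_of_pos (by positivity)]
        simp only [Set.mem_setOf_eq, this]
        nlinarith
  have hdense : Dense (⋂ p, D p) := dense_iInter_of_isOpen hDopen hDdense
  intro i
  by_contra hαi
  obtain ⟨z₀, hz₀B, hfz₀⟩ := hnz i
  have hUopen : IsOpen (B ∩ f i ⁻¹' ({0}ᶜ)) :=
    (hol i).continuousOn.isOpen_inter_preimage hBo isOpen_compl_singleton
  obtain ⟨z, hzU, hzD⟩ :=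
    hdense.inter_open_nonempty _ hUopen ⟨z₀, hz₀B, by simpa using hfz₀⟩
  obtain ⟨hzB, hfz⟩ := hzU
  have hfz : f i z ≠ 0 := by simpa using hfz
  have hzabs : ‖z‖ < 1 := by
    simpa [hBdef, Metric.mem_ball, Complex.dist_eq] using hzB
  have hzdist : ∀ j k, j ≠ k → ‖f j z‖ ≠ ‖f k z‖ := by
    intro j k hjk h
    have hmem := Set.mem_iInter.1 hzD (j, k)
    simp only [hDdef, if_neg hjk] at hmem
    rcases hmem with hmem | hmem
    · exact absurd hmem (not_lt.2 hzabs.le)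
    · apply hmem.2
      simp only [Set.mem_preimage, Set.mem_singleton_iff, hgdef]
      have : Complex.normSq (f j z) = Complex.normSq (f k z) := by
        rw [← Complex.sq_norm, ← Complex.sq_norm, h]
      simp [this]
  set c : ℕ → ℝ := fun j => ‖f j z‖ with hcdef
  have hcs : Summable c := habs z hzB
  have hc0 : Tendsto c atTop (nhds 0) := hcs.tendsto_atTop_zero
  have hci : 0 < c i := norm_pos_iff.mpr hfz
  obtain ⟨M, hM⟩ := Filter.eventually_atTop.1 (hc0.eventually (gt_mem_nhds hci))
  set T : Finset ℕ := (Finset.range M).filter (fun j => c i ≤ c j ∧ α j ≠ 0) with hTdef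
  have hiT : i ∈ T := by
    have hiM : i < M := by
      by_contra h
      exact absurd (hM i (not_lt.1 h)) (lt_irrefl _)
    simp [hTdef, hiM, le_refl, hαi]
  obtain ⟨j₀, hj₀T, hj₀max⟩ := T.exists_max_image c ⟨i, hiT⟩
  have hj₀ : c i ≤ c j₀ ∧ α j₀ ≠ 0 := by
    have := Finset.mem_filter.1 hj₀T
    exact this.2
  have hcj₀ : 0 < c j₀ := lt_of_lt_of_le hci hj₀.1
  have hfj₀ : f j₀ z ≠ 0 := by
    intro h
    rw [hcdef] at hcj₀
    simp [h] at hcj₀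
  have hmax : ∀ k, α k ≠ 0 → k ≠ j₀ → c k < c j₀ := by
    intro k hk hkj
    by_cases h1 : c i ≤ c k
    · have hkM : k < M := by
        by_contra h
        exact absurd (hM k (not_lt.1 h)) (not_lt.2 h1)
      have hkT : k ∈ T := by simp [hTdef, hkM, h1, hk]
      exact lt_of_le_of_ne (hj₀max k hkT) (hzdist k j₀ hkj)
    · exact lt_of_lt_of_le (not_le.1 h1) hj₀.1
  set r : ℕ → ℂ := fun k => f k z / f j₀ z with hrdef
  have hrnorm : ∀ k, ‖r k‖ = c k / c j₀ := by
    intro k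
    simp [hrdef, hcdef, norm_div]
  have hrlt : ∀ k, α k ≠ 0 → k ≠ j₀ → ‖r k‖ < 1 := by
    intro k hk hkj
    rw [hrnorm]
    exact (div_lt_one hcj₀).2 (hmax k hk hkj)
  have hrle : ∀ k, α k ≠ 0 → k ≠ j₀ → ‖r k‖ ≤ 1 := fun k hk hkj => (hrlt k hk hkj).le
  have key : ∀ m, (∑' k, (if k = j₀ then 0 else α k * r k ^ N m)) = -α j₀ := by
    intro m
    have h1 : HasSum (fun k => α k * r k ^ N m) 0 := by
      have h := (hzero m z hzB).div_const ((f j₀ z) ^ N m)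
      rw [zero_div] at h
      have heq : (fun k => α k * r k ^ N m)
          = fun k => α k * f k z ^ N m / f j₀ z ^ N m := by
        funext k
        rw [hrdef]
        rw [div_pow, mul_div_assoc]
      rw [heq]
      exact h
    have h2 := Summable.tsum_eq_add_tsum_ite h1.summable j₀
    rw [h1.tsum_eq] at h2
    have hrj : r j₀ = 1 := div_self hfj₀
    rw [hrj, one_pow, mul_one] at h2
    exact eq_neg_of_add_eq_zero_right h2.symm
  have hbound_sum : Summable (fun k => C * ‖r k‖) := by
    have h := (hcs.div_const (c j₀)).mul_left C
    refine h.congr ?_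
    intro k
    rw [hrnorm]
  have htends : Tendsto (fun m => ∑' k, (if k = j₀ then 0 else α k * r k ^ N m))
      atTop (nhds (∑' _ : ℕ, (0:ℂ))) := by
    refine tendsto_tsum_of_dominated_convergence hbound_sum ?_ ?_
    · intro k
      by_cases hk : k = j₀
      · simp only [if_pos hk]
        exact tendsto_const_nhds
      · by_cases hα : α k = 0
        · simp only [if_neg hk, hα, zero_mul]
          exact tendsto_const_nhds
        · simp only [if_neg hk]
          have hpow : Tendsto (fun m => r k ^ N m) atTop (nhds 0) :=
            (tendsto_pow_atTop_nhds_zero_of_norm_lt_one (hrlt k hα hk)).comp hN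
          simpa using hpow.const_mul (α k)
    · filter_upwards [hN.eventually_ge_atTop 1] with m hm
      intro k
      by_cases hk : k = j₀
      · simp only [if_pos hk, norm_zero]
        positivity
      · by_cases hα : α k = 0
        · simp only [if_neg hk, hα, zero_mul, norm_zero]
          positivity
        · simp only [if_neg hk, norm_mul, norm_pow]
          have h1 : ‖α k‖ ≤ C := by exact hC k
          have h2 : ‖r k‖ ^ N m ≤ ‖r k‖ := by
            calc ‖r k‖ ^ N m ≤ ‖r k‖ ^ 1 :=
                  pow_le_pow_of_le_one (norm_nonneg _) (hrle k hα hk) hm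
              _ = ‖r k‖ := pow_one _
          exact mul_le_mul h1 h2 (by positivity) hC0
  rw [tsum_zero] at htends
  have htends' : Tendsto (fun _ : ℕ => -α j₀) atTop (nhds (0:ℂ)) := by
    refine htends.congr ?_
    intro m
    exact key m
  have : -α j₀ = 0 := tendsto_nhds_unique tendsto_const_nhds htends'
  exact hj₀.2 (by simpa [neg_eq_zero] using this)
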